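/- In G(Σ, e) one has the relation Σ_{i=1}^{2^ν} Ψ_{w_i} = −(6s₂ + 4·2^ν)·Ψ_w. -/

import Mathlib

/-- The subgroup of relations: `e s • ψ s - e t • ψ t` for all `s t`, together with
`∑ s, ψ s`. -/
noncomputable def relSub {S : Type*} [Fintype S] (e : S → ℤ) : AddSubgroup (S →₀ ℤ) :=
  AddSubgroup.closure
    ({x | ∃ s t : S, x = Finsupp.single s (e s) - Finsupp.single t (e t)} ∪
      {∑ s : S, Finsupp.single s 1})

/-- `G(Σ, e)`: the quotient of the free abelian group on `Σ` by the relations. -/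
abbrev CompGrp {S : Type*} [Fintype S] (e : S → ℤ) : Type _ :=
  (S →₀ ℤ) ⧸ relSub e

/-- `Ψ s`: the image of the basis element `ψ s` in `G(Σ, e)`. -/
noncomputable def Psi {S : Type*} [Fintype S] (e : S → ℤ) (s : S) : CompGrp e :=
  QuotientAddGroup.mk (Finsupp.single s 1)

/-- `Σ = Σ₂ ⊔ Σ₄ ⊔ Σ₆` with `#Σ₂ = s₂` and `#Σ₄ = #Σ₆ = 2^ν`. -/
abbrev Sig4 (s₂ ν : ℕ) : Type := Fin s₂ ⊕ (Fin (2 ^ ν) ⊕ Fin (2 ^ ν))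

/-- `e ≡ 1` on `Σ₂`, `e ≡ 2` on `Σ₄` and `e ≡ 3` on `Σ₆`. -/
def e4 (s₂ ν : ℕ) : Sig4 s₂ ν → ℤ :=
  Sum.elim (fun _ => 1) (Sum.elim (fun _ => 2) (fun _ => 3))

/-- `w i` (`1`-based): the `i`-th point of `Σ₄ = {w_1, …, w_{2^ν}}`. -/
def wPt4 (s₂ ν : ℕ) (i : ℕ) : Sig4 s₂ ν :=
  Sum.inr (Sum.inl ⟨(i - 1) % 2 ^ ν, Nat.mod_lt _ (Nat.pow_pos (by norm_num))⟩)

/-- `t i` (`1`-based): the `i`-th point of `Σ₆ = {t_1, …, t_{2^ν}}`. -/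
def tPt4 (s₂ ν : ℕ) (i : ℕ) : Sig4 s₂ ν :=
  Sum.inr (Sum.inr ⟨(i - 1) % 2 ^ ν, Nat.mod_lt _ (Nat.pow_pos (by norm_num))⟩)

/-- The generators `u_j` (`1`-based, `u_0 := Ψ w` with `w = w_{2^ν - 1}`):
for `1 ≤ k ≤ 2^{ν-1} - 2`, `u_{2k-1} = Ψ w_{2k-1} - Ψ w` and
`u_{2k} = Ψ w_{2k-1} + Ψ w_{2k} - Ψ w - Ψ w'` (with `w' = w_{2^ν}`); and
`u_{2^ν-3} = Ψ w_{2^ν-3} - Ψ w` (the odd-index formula again),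
`u_{2^ν-2} = Ψ w_{2^ν-3} - Ψ w_{2^ν-2}`. -/
noncomputable def uGen4 (s₂ ν : ℕ) : ℕ → CompGrp (e4 s₂ ν) := fun j =>
  if j = 0 then Psi (e4 s₂ ν) (wPt4 s₂ ν (2 ^ ν - 1))
  else if j = 2 ^ ν - 2 then
    Psi (e4 s₂ ν) (wPt4 s₂ ν (2 ^ ν - 3)) - Psi (e4 s₂ ν) (wPt4 s₂ ν (2 ^ ν - 2))
  else if j % 2 = 1 then
    Psi (e4 s₂ ν) (wPt4 s₂ ν j) - Psi (e4 s₂ ν) (wPt4 s₂ ν (2 ^ ν - 1))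
  else
    Psi (e4 s₂ ν) (wPt4 s₂ ν (j - 1)) + Psi (e4 s₂ ν) (wPt4 s₂ ν j)
      - Psi (e4 s₂ ν) (wPt4 s₂ ν (2 ^ ν - 1)) - Psi (e4 s₂ ν) (wPt4 s₂ ν (2 ^ ν))

/-- The generators `v_j` (`1`-based): `v_{2k-1} = Ψ t_{2k-1} - Ψ t_{2k}` for
`1 ≤ k ≤ 2^{ν-1}` and `v_{2k} = Ψ t_{2k-1} + Ψ t_{2k} - Ψ t - Ψ t'` for
`1 ≤ k ≤ 2^{ν-1} - 1` (with `t = t_{2^ν - 1}`, `t' = t_{2^ν}`). -/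
noncomputable def vGen4 (s₂ ν : ℕ) : ℕ → CompGrp (e4 s₂ ν) := fun j =>
  if j % 2 = 1 then
    Psi (e4 s₂ ν) (tPt4 s₂ ν j) - Psi (e4 s₂ ν) (tPt4 s₂ ν (j + 1))
  else
    Psi (e4 s₂ ν) (tPt4 s₂ ν (j - 1)) + Psi (e4 s₂ ν) (tPt4 s₂ ν j)
      - Psi (e4 s₂ ν) (tPt4 s₂ ν (2 ^ ν - 1)) - Psi (e4 s₂ ν) (tPt4 s₂ ν (2 ^ ν))


section Aux

lemma sum_reindex4 {M : Type*} [AddCommMonoid M] (n : ℕ) (hn : 0 < n)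
    (f : Fin n → M) :
    ∑ i ∈ Finset.Icc 1 n, f ⟨(i - 1) % n, Nat.mod_lt _ hn⟩ = ∑ j : Fin n, f j := by
  refine Finset.sum_nbij' (fun i => (⟨(i - 1) % n, Nat.mod_lt _ hn⟩ : Fin n))
    (fun j => (j : ℕ) + 1) ?_ ?_ ?_ ?_ ?_
  · intro i _; exact Finset.mem_univ _
  · intro j _
    simp only [Finset.mem_Icc]
    exact ⟨Nat.le_add_left 1 _, Nat.succ_le_of_lt j.2⟩
  · intro i hi
    simp only [Finset.mem_Icc] at hi
    show (i - 1) % n + 1 = i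
    rw [Nat.mod_eq_of_lt (by omega)]; omega
  · intro j _
    ext
    simp [Nat.mod_eq_of_lt j.2]
  · intro i _; rfl

lemma psi_rel {S : Type*} [Fintype S] (e : S → ℤ) (s t : S) :
    e s • Psi e s = e t • Psi e t := by
  have hmem : Finsupp.single s (e s) - Finsupp.single t (e t) ∈ relSub e :=
    AddSubgroup.subset_closure (Or.inl ⟨s, t, rfl⟩)
  have h0 : (QuotientAddGroup.mk (Finsupp.single s (e s) - Finsupp.single t (e t)) :
      CompGrp e) = 0 := (QuotientAddGroup.eq_zero_iff _).mpr hmem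
  have hs : (Finsupp.single s (e s)) = e s • Finsupp.single s (1 : ℤ) := by
    rw [Finsupp.smul_single' (e s) s 1, mul_one]
  have ht : (Finsupp.single t (e t)) = e t • Finsupp.single t (1 : ℤ) := by
    rw [Finsupp.smul_single' (e t) t 1, mul_one]
  rw [hs, ht] at h0
  rw [QuotientAddGroup.mk_sub] at h0
  have := sub_eq_zero.mp h0
  rw [QuotientAddGroup.mk_zsmul, QuotientAddGroup.mk_zsmul] at this
  exact this

lemma psi_sum {S : Type*} [Fintype S] (e : S → ℤ) :
    ∑ s : S, Psi e s = 0 := by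
  have hmem : (∑ s : S, Finsupp.single s (1 : ℤ)) ∈ relSub e :=
    AddSubgroup.subset_closure (Or.inr rfl)
  have h0 : (QuotientAddGroup.mk (∑ s : S, Finsupp.single s (1 : ℤ)) :
      CompGrp e) = 0 := (QuotientAddGroup.eq_zero_iff _).mpr hmem
  rw [← h0]
  exact (map_sum (QuotientAddGroup.mk' (relSub e)) _ _).symm

end Aux

/-- in `G(Σ, e)` one has `∑_{i=1}^{2^ν} Ψ w_i = -(6s₂ + 4·2^ν) • Ψ w`,
where `w = w_{2^ν - 1}`. -/
theorem stmt12 (s₂ ν : ℕ) (hν : 1 ≤ ν) :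
    ∑ i ∈ Finset.Icc 1 (2 ^ ν), Psi (e4 s₂ ν) (wPt4 s₂ ν i) =
      -((6 * s₂ + 4 * 2 ^ ν) • Psi (e4 s₂ ν) (wPt4 s₂ ν (2 ^ ν - 1))) := by
  classical
  have hn : 0 < 2 ^ ν := Nat.pow_pos (by norm_num)
  set w0 : Sig4 s₂ ν := wPt4 s₂ ν (2 ^ ν - 1) with hw0
  set A : CompGrp (e4 s₂ ν) := Psi (e4 s₂ ν) w0 with hA
  -- reindex the LHS sum
  have hre : ∑ i ∈ Finset.Icc 1 (2 ^ ν), Psi (e4 s₂ ν) (wPt4 s₂ ν i) =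
      ∑ j : Fin (2 ^ ν), Psi (e4 s₂ ν) (Sum.inr (Sum.inl j)) := by
    exact sum_reindex4 (2 ^ ν) hn (fun j => Psi (e4 s₂ ν) (Sum.inr (Sum.inl j)))
  rw [hre]
  set PW : CompGrp (e4 s₂ ν) := ∑ j : Fin (2 ^ ν), Psi (e4 s₂ ν) (Sum.inr (Sum.inl j)) with hPW
  set PT : CompGrp (e4 s₂ ν) := ∑ j : Fin (2 ^ ν), Psi (e4 s₂ ν) (Sum.inr (Sum.inr j)) with hPT
  set P2 : CompGrp (e4 s₂ ν) := ∑ σ : Fin s₂, Psi (e4 s₂ ν) (Sum.inl σ) with hP2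
  have e_w0 : e4 s₂ ν w0 = 2 := rfl
  -- basic relations
  have hσ : ∀ σ : Fin s₂, Psi (e4 s₂ ν) (Sum.inl σ) = (2 : ℤ) • A := by
    intro σ
    have := psi_rel (e4 s₂ ν) (Sum.inl σ) w0
    rw [e_w0] at this
    rw [← this]; exact (one_smul ℤ _).symm
  have hWj : ∀ j : Fin (2 ^ ν), (2 : ℤ) • Psi (e4 s₂ ν) (Sum.inr (Sum.inl j)) = (2 : ℤ) • A := by
    intro j
    have := psi_rel (e4 s₂ ν) (Sum.inr (Sum.inl j)) w0
    rw [e_w0] at this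
    exact this
  have hTj : ∀ j : Fin (2 ^ ν), (3 : ℤ) • Psi (e4 s₂ ν) (Sum.inr (Sum.inr j)) = (2 : ℤ) • A := by
    intro j
    have := psi_rel (e4 s₂ ν) (Sum.inr (Sum.inr j)) w0
    rw [e_w0] at this
    exact this
  have hsum : P2 + (PW + PT) = 0 := by
    have := psi_sum (e4 s₂ ν)
    rwa [Fintype.sum_sum_type, Fintype.sum_sum_type] at this
  have hP2v : P2 = (s₂ : ℤ) • ((2 : ℤ) • A) := by
    rw [hP2]
    simp [hσ, Finset.sum_const]
  have h2PW : (2 : ℤ) • PW = (2 ^ ν : ℤ) • ((2 : ℤ) • A) := by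
    rw [hPW, Finset.smul_sum,
      show ((2:ℤ)^ν) = ((2^ν : ℕ) : ℤ) by push_cast; ring, natCast_zsmul]
    simp [hWj, Finset.sum_const]
  have h3PT : (3 : ℤ) • PT = (2 ^ ν : ℤ) • ((2 : ℤ) • A) := by
    rw [hPT, Finset.smul_sum,
      show ((2:ℤ)^ν) = ((2^ν : ℕ) : ℤ) by push_cast; ring, natCast_zsmul]
    simp [hTj, Finset.sum_const]
  have key : PW = (3 : ℤ) • (P2 + (PW + PT)) - (3 : ℤ) • P2 - (3 : ℤ) • PT - (2 : ℤ) • PW := by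
    abel
  rw [hsum, hP2v, h3PT, h2PW, smul_zero] at key
  have : -((6 * s₂ + 4 * 2 ^ ν) • A) =
      (0 : CompGrp (e4 s₂ ν)) - (3 : ℤ) • ((s₂ : ℤ) • (2 : ℤ) • A) -
        (2 ^ ν : ℤ) • ((2 : ℤ) • A) - (2 ^ ν : ℤ) • ((2 : ℤ) • A) := by
    rw [← natCast_zsmul A (6 * s₂ + 4 * 2 ^ ν)]
    push_cast
    module
  rw [key, this]
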